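/- Let (Ω, P) be a probability space and X, W : Ω → ℝ independent square-integrable random variables with Var(X) = σ², E[W] = 0, Var(W) = b², and let τ > 0. Define X⁽¹⁾ = X + τ·W and X⁽²⁾ = X − (1/τ)·W. Then Var(X⁽¹⁾) = σ² + τ²b², Var(X⁽²⁾) = σ² + b²/τ², and, if σ² + τ²b² > 0 and σ² + b²/τ² > 0, the correlation of X⁽¹⁾ and X⁽²⁾ equals (σ² − b²) / √((σ² + τ²b²)(σ² + b²/τ²)). -/

import Mathlib

open MeasureTheory ProbabilityTheory

/-- Covariance of two real-valued random variables: `E[UV] - E[U]E[V]`. -/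
noncomputable def cov {Ω : Type*} [MeasurableSpace Ω] (P : Measure Ω) (U V : Ω → ℝ) : ℝ :=
  (∫ ω, U ω * V ω ∂P) - (∫ ω, U ω ∂P) * (∫ ω, V ω ∂P)

theorem data_fission_variances_and_correlation
    {Ω : Type*} [MeasurableSpace Ω] (P : Measure Ω) [IsProbabilityMeasure P]
    (X W : Ω → ℝ) (hX : Measurable X) (hW : Measurable W)
    (hXW : IndepFun X W P)
    (hX2 : MemLp X 2 P) (hW2 : MemLp W 2 P)
    (σ2 b2 : ℝ) (hσ2 : variance X P = σ2)
    (hWmean : (∫ ω, W ω ∂P) = 0) (hb2 : variance W P = b2)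
    (τ : ℝ) (hτ : 0 < τ) :
    variance (fun ω => X ω + τ * W ω) P = σ2 + τ ^ 2 * b2 ∧
    variance (fun ω => X ω - (1 / τ) * W ω) P = σ2 + b2 / τ ^ 2 ∧
    (0 < σ2 + τ ^ 2 * b2 → 0 < σ2 + b2 / τ ^ 2 →
      cov P (fun ω => X ω + τ * W ω) (fun ω => X ω - (1 / τ) * W ω)
          / Real.sqrt (variance (fun ω => X ω + τ * W ω) P
              * variance (fun ω => X ω - (1 / τ) * W ω) P)
        = (σ2 - b2) / Real.sqrt ((σ2 + τ ^ 2 * b2) * (σ2 + b2 / τ ^ 2))) := by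
  have hτ0 : τ ≠ 0 := ne_of_gt hτ
  have hIX : Integrable X P := hX2.integrable one_le_two
  have hIW : Integrable W P := hW2.integrable one_le_two
  have hW2a : MemLp (fun ω => τ * W ω) 2 P := hW2.const_mul τ
  have hW2b : MemLp (fun ω => -(1 / τ) * W ω) 2 P := hW2.const_mul _
  have hInd1 : IndepFun X (fun ω => τ * W ω) P :=
    hXW.comp measurable_id (measurable_const_mul τ)
  have hInd2 : IndepFun X (fun ω => -(1 / τ) * W ω) P :=
    hXW.comp measurable_id (measurable_const_mul _)
  have hvar1 : variance (fun ω => X ω + τ * W ω) P = σ2 + τ ^ 2 * b2 := by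
    have := hInd1.variance_add hX2 hW2a
    have heq : (fun ω => X ω + τ * W ω) = X + fun ω => τ * W ω := rfl
    rw [heq, this, variance_const_mul, hσ2, hb2]
  have hvar2 : variance (fun ω => X ω - (1 / τ) * W ω) P = σ2 + b2 / τ ^ 2 := by
    have := hInd2.variance_add hX2 hW2b
    have heq : (fun ω => X ω - (1 / τ) * W ω) = X + fun ω => -(1 / τ) * W ω := by
      funext ω; simp only [Pi.add_apply]; ring
    rw [heq, this, variance_const_mul, hσ2, hb2]
    field_simp
  refine ⟨hvar1, hvar2, fun h1 h2 => ?_⟩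
  have hXWint : Integrable (fun ω => X ω * W ω) P := hXW.integrable_mul hIX hIW
  have hEXW : (∫ ω, X ω * W ω ∂P) = 0 := by
    rw [hXW.integral_fun_mul_eq_mul_integral hIX.aestronglyMeasurable hIW.aestronglyMeasurable, hWmean, mul_zero]
  have hEW2 : (∫ ω, W ω * W ω ∂P) = b2 := by
    have h := variance_eq_sub hW2
    simp only [Pi.pow_apply, sq] at h
    rw [hb2, hWmean] at h
    simpa using h.symm
  have hEX2 : (∫ ω, X ω * X ω ∂P) = σ2 + (∫ ω, X ω ∂P) ^ 2 := by
    have := variance_eq_sub hX2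
    simp only [Pi.pow_apply, sq] at this
    rw [hσ2] at this
    linarith [this]
  have hXXint : Integrable (fun ω => X ω * X ω) P := by
    simpa [sq] using hX2.integrable_sq
  have hWWint : Integrable (fun ω => W ω * W ω) P := by
    simpa [sq] using hW2.integrable_sq
  have hcov : cov P (fun ω => X ω + τ * W ω) (fun ω => X ω - (1 / τ) * W ω) = σ2 - b2 := by
    have hfun : ∀ ω, (X ω + τ * W ω) * (X ω - (1 / τ) * W ω)
        = X ω * X ω + (τ - 1 / τ) * (X ω * W ω) - W ω * W ω := by
      intro ω; field_simp; ring
    have hint : (∫ ω, (X ω + τ * W ω) * (X ω - (1 / τ) * W ω) ∂P)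
        = (∫ ω, X ω * X ω ∂P) + (τ - 1 / τ) * (∫ ω, X ω * W ω ∂P) - (∫ ω, W ω * W ω ∂P) := by
      simp only [hfun]
      have hcm : Integrable (fun ω => (τ - 1 / τ) * (X ω * W ω)) P := hXWint.const_mul _
      have hf : Integrable (fun ω => X ω * X ω + (τ - 1 / τ) * (X ω * W ω)) P := hXXint.add hcm
      rw [integral_sub hf hWWint, integral_add hXXint hcm, integral_const_mul]
    have hm1 : (∫ ω, (X ω + τ * W ω) ∂P) = ∫ ω, X ω ∂P := by
      have hcm : Integrable (fun ω => τ * W ω) P := hIW.const_mul τ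
      rw [integral_add hIX hcm, integral_const_mul, hWmean, mul_zero, add_zero]
    have hm2 : (∫ ω, (X ω - (1 / τ) * W ω) ∂P) = ∫ ω, X ω ∂P := by
      have hcm : Integrable (fun ω => (1 / τ) * W ω) P := hIW.const_mul _
      rw [integral_sub hIX hcm, integral_const_mul, hWmean, mul_zero, sub_zero]
    rw [cov, hint, hm1, hm2, hEX2, hEXW, hEW2]
    ring
  rw [hcov, hvar1, hvar2]
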